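/- Let C > 0, let (δ_n) ⊂ (0,1) with δ_n → 0, let (μ_n) ⊂ (0,∞) with μ_n → 0, let (N_n) ⊂ ℕ with N_n ≥ 2, and for each n let u_n : {0,…,N_n} → S² satisfy the periodic boundary condition and H_{δ_n}(u_n) ≤ C·μ_n. Then there exist C' > 0 and n₀ ∈ ℕ such that for all n ≥ n₀ and all 0 ≤ i ≤ N_n − 1 one has |(1 − δ_n) − ⟨u_n^{i+1}, u_n^i⟩| ≤ C'·μ_n^{1/2}; in particular sup_{0 ≤ i ≤ N_n−1} |1 − ⟨u_n^{i+1},u_n^i⟩| → 0 as n → ∞. -/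

import Mathlib

open MeasureTheory Filter
open scoped RealInnerProductSpace

/-- The cross product on Euclidean `ℝ³`. -/
noncomputable def cross3 (a b : EuclideanSpace ℝ (Fin 3)) : EuclideanSpace ℝ (Fin 3) :=
  (WithLp.equiv 2 (Fin 3 → ℝ)).symm
    (crossProduct ((WithLp.equiv 2 (Fin 3 → ℝ)) a) ((WithLp.equiv 2 (Fin 3 → ℝ)) b))

private lemma inner_mid (a b c : EuclideanSpace ℝ (Fin 3)) (t : ℝ) (hb : ‖b‖ = 1) :
    ⟪a - t • b + c, b⟫ = ⟪a, b⟫ + ⟪b, c⟫ - t := by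
  have h1 : ⟪b, b⟫ = (1 : ℝ) := by
    rw [real_inner_self_eq_norm_sq, hb]; norm_num
  have h2 : ⟪c, b⟫ = ⟪b, c⟫ := real_inner_comm _ _
  simp only [inner_add_left, inner_sub_left, real_inner_smul_left, h1, h2]
  ring

private lemma inner_diff (a b c : EuclideanSpace ℝ (Fin 3)) (t : ℝ)
    (ha : ‖a‖ = 1) (hc : ‖c‖ = 1) :
    ⟪a - t • b + c, a - c⟫ = -(t * (⟪a, b⟫ - ⟪b, c⟫)) := by
  have ha' : ⟪a, a⟫ = (1 : ℝ) := by rw [real_inner_self_eq_norm_sq, ha]; norm_num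
  have hc' : ⟪c, c⟫ = (1 : ℝ) := by rw [real_inner_self_eq_norm_sq, hc]; norm_num
  have hac : ⟪c, a⟫ = ⟪a, c⟫ := real_inner_comm _ _
  have hba : ⟪b, a⟫ = ⟪a, b⟫ := real_inner_comm _ _
  simp only [inner_add_left, inner_sub_left, inner_sub_right, real_inner_smul_left,
    ha', hc', hac, hba]
  ring

private lemma keylem (C : ℝ) (hC : 0 ≤ C) (d m : ℝ) (hd0 : 0 < d) (hd : d ≤ 1/2)
    (N : ℕ) (hN : 2 ≤ N) (v : ℕ → EuclideanSpace ℝ (Fin 3))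
    (hv : ∀ i ≤ N, ‖v i‖ = 1)
    (hE : (1/2 : ℝ) * ∑ i ∈ Finset.range (N - 1),
        ‖v (i + 2) - (2 * (1 - d)) • v (i + 1) + v i‖ ^ 2 ≤ C * m) :
    ∀ j ≤ N - 1, |(1 - d) - ⟪v (j + 1), v j⟫| ≤
      (3 * Real.sqrt (2 * C) / 2) * Real.sqrt m := by
  have main : ∀ i, i + 1 ≤ N - 1 →
      |(1 - d) - ⟪v (i + 1), v i⟫| ≤ 3 / 2 * Real.sqrt (2 * (C * m)) ∧
      |(1 - d) - ⟪v (i + 2), v (i + 1)⟫| ≤ 3 / 2 * Real.sqrt (2 * (C * m)) := by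
    intro i hi
    set w := v (i + 2) - (2 * (1 - d)) • v (i + 1) + v i with hwdef
    have hterm : ‖w‖ ^ 2 ≤ 2 * (C * m) := by
      have hnn : ∀ k ∈ Finset.range (N - 1),
          (0 : ℝ) ≤ ‖v (k + 2) - (2 * (1 - d)) • v (k + 1) + v k‖ ^ 2 :=
        fun k _ => sq_nonneg _
      have hmem : i ∈ Finset.range (N - 1) := Finset.mem_range.mpr (by omega)
      have h := Finset.single_le_sum hnn hmem
      rw [← hwdef] at h
      linarith
    have hwn : ‖w‖ ≤ Real.sqrt (2 * (C * m)) := by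
      calc ‖w‖ = Real.sqrt (‖w‖ ^ 2) := (Real.sqrt_sq (norm_nonneg _)).symm
        _ ≤ Real.sqrt (2 * (C * m)) := Real.sqrt_le_sqrt hterm
    have h0 : ‖v i‖ = 1 := hv _ (by omega)
    have h1 : ‖v (i + 1)‖ = 1 := hv _ (by omega)
    have h2 : ‖v (i + 2)‖ = 1 := hv _ (by omega)
    set α := ⟪v (i + 1), v i⟫ with hα
    set β := ⟪v (i + 2), v (i + 1)⟫ with hβ
    have hs : |β + α - 2 * (1 - d)| ≤ ‖w‖ := by
      have h := abs_real_inner_le_norm w (v (i + 1))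
      rw [h1, mul_one] at h
      rw [hwdef] at h ⊢
      rwa [inner_mid _ _ _ _ h1] at h
    have hdiff : (2 * (1 - d)) * |β - α| ≤ 2 * ‖w‖ := by
      have h := abs_real_inner_le_norm w (v (i + 2) - v i)
      have hn : ‖v (i + 2) - v i‖ ≤ 2 := by
        calc ‖v (i + 2) - v i‖ ≤ ‖v (i + 2)‖ + ‖v i‖ := norm_sub_le _ _
          _ = 2 := by rw [h0, h2]; norm_num
      have h' : |⟪w, v (i + 2) - v i⟫| ≤ ‖w‖ * 2 :=
        h.trans (by nlinarith [norm_nonneg w])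
      rw [hwdef, inner_diff _ _ _ _ h2 h0] at h'
      rw [abs_neg, abs_mul] at h'
      have hdpos : (0 : ℝ) < 2 * (1 - d) := by linarith
      rw [abs_of_pos hdpos] at h'
      rw [← hα, ← hβ] at h'
      linarith
    have hba : |β - α| ≤ 2 * ‖w‖ := by
      have h2d : (1 : ℝ) ≤ 2 * (1 - d) := by linarith
      nlinarith [abs_nonneg (β - α)]
    have hsqnn : (0 : ℝ) ≤ Real.sqrt (2 * (C * m)) := Real.sqrt_nonneg _
    rw [abs_le] at hs hba
    refine ⟨abs_le.mpr ⟨?_, ?_⟩, abs_le.mpr ⟨?_, ?_⟩⟩ <;> linarith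
  intro j hj
  have hsm : Real.sqrt (2 * (C * m)) = Real.sqrt (2 * C) * Real.sqrt m := by
    rw [show 2 * (C * m) = 2 * C * m by ring, Real.sqrt_mul (by linarith)]
  rcases Nat.lt_or_ge j (N - 1) with h | h
  · have hmain := (main j (by omega)).1
    rw [hsm] at hmain
    linarith
  · have hj' : j = N - 1 := le_antisymm hj h
    have hmain := (main (N - 2) (by omega)).2
    have e1 : N - 2 + 1 = j := by omega
    have e2 : N - 2 + 2 = j + 1 := by omega
    rw [e1, e2, hsm] at hmain
    linarith

theorem stmt7 (C : ℝ) (hC : 0 < C)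
    (δ : ℕ → ℝ) (hδ : ∀ n, δ n ∈ Set.Ioo (0 : ℝ) 1) (hδ0 : Tendsto δ atTop (nhds 0))
    (μ : ℕ → ℝ) (hμ : ∀ n, 0 < μ n) (hμ0 : Tendsto μ atTop (nhds 0))
    (Nn : ℕ → ℕ) (hN : ∀ n, 2 ≤ Nn n)
    (u : ℕ → ℕ → EuclideanSpace ℝ (Fin 3)) (hu : ∀ n, ∀ i ≤ Nn n, ‖u n i‖ = 1)
    (hper : ∀ n, ⟪u n 1, u n 0⟫ = ⟪u n (Nn n), u n (Nn n - 1)⟫)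
    (hE : ∀ n, (1 / 2 : ℝ) * ∑ i ∈ Finset.range (Nn n - 1),
        ‖u n (i + 2) - (2 * (1 - δ n)) • u n (i + 1) + u n i‖ ^ 2 ≤ C * μ n) :
    (∃ C' : ℝ, 0 < C' ∧ ∃ n₀ : ℕ, ∀ n ≥ n₀, ∀ i ≤ Nn n - 1,
        |(1 - δ n) - ⟪u n (i + 1), u n i⟫| ≤ C' * Real.sqrt (μ n)) ∧
    (∀ ε : ℝ, 0 < ε → ∃ n₁ : ℕ, ∀ n ≥ n₁, ∀ i ≤ Nn n - 1,
        |1 - ⟪u n (i + 1), u n i⟫| ≤ ε) := by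
  set C' := 3 * Real.sqrt (2 * C) / 2 with hC'def
  have hC' : 0 < C' := by
    have : 0 < Real.sqrt (2 * C) := Real.sqrt_pos.mpr (by linarith)
    positivity
  have hev : ∀ᶠ n in atTop, δ n ≤ 1 / 2 := by
    have := hδ0.eventually (eventually_le_nhds (by norm_num : (0:ℝ) < 1/2))
    exact this
  have part1 : ∃ n₀ : ℕ, ∀ n ≥ n₀, ∀ i ≤ Nn n - 1,
      |(1 - δ n) - ⟪u n (i + 1), u n i⟫| ≤ C' * Real.sqrt (μ n) := by
    obtain ⟨n₀, hn₀⟩ := eventually_atTop.mp hev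
    exact ⟨n₀, fun n hn i hi =>
      keylem C hC.le (δ n) (μ n) (hδ n).1 (hn₀ n hn) (Nn n) (hN n) (u n) (hu n) (hE n) i hi⟩
  refine ⟨⟨C', hC', part1⟩, ?_⟩
  intro ε hε
  obtain ⟨n₀, hn₀⟩ := part1
  have hsq : Tendsto (fun n => C' * Real.sqrt (μ n)) atTop (nhds 0) := by
    have h1 : Tendsto (fun n => Real.sqrt (μ n)) atTop (nhds 0) := by
      have := (Real.continuous_sqrt.tendsto 0).comp hμ0
      simpa [Function.comp_def] using this
    have := h1.const_mul C'
    simpa using this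
  have h2 : ∀ᶠ n in atTop, C' * Real.sqrt (μ n) ≤ ε / 2 :=
    hsq.eventually (eventually_le_nhds (by linarith))
  have h3 : ∀ᶠ n in atTop, δ n ≤ ε / 2 :=
    hδ0.eventually (eventually_le_nhds (by linarith))
  obtain ⟨n₁, hn₁⟩ := eventually_atTop.mp (h2.and h3)
  refine ⟨max n₀ n₁, fun n hn i hi => ?_⟩
  have hb := hn₀ n (le_of_max_le_left hn) i hi
  obtain ⟨hμε, hδε⟩ := hn₁ n (le_of_max_le_right hn)
  have hδn := (hδ n).1
  calc |1 - ⟪u n (i + 1), u n i⟫|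
      = |((1 - δ n) - ⟪u n (i + 1), u n i⟫) + δ n| := by ring_nf
    _ ≤ |(1 - δ n) - ⟪u n (i + 1), u n i⟫| + |δ n| := abs_add_le _ _
    _ ≤ ε / 2 + ε / 2 := by
        rw [abs_of_pos hδn]; exact add_le_add (hb.trans hμε) hδε
    _ = ε := by ring
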